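/- For all z = (x, Θ) and z̃ = (x̃, Θ̃) in ℝⁿ × ℝ^{L×ℓ} with ‖Θ − Θ̄‖_F ≤ D, ‖Θ̃ − Θ̄‖_F ≤ D and ‖Θ − Θ̃‖_F ≤ D, the drift 𝓗 satisfies the one-sided growth condition ⟨z − z̃, 𝓗(z) − 𝓗(z̃)⟩ ≤ c r² + c r (‖z‖ + ‖z̃‖), where r = ‖z − z̃‖ and c = ‖P B‖₂ · D · 𝓛 / λ_min(P), with λ_min(P) the smallest eigenvalue of P and ‖P B‖₂ the spectral norm of P B. -/

import Mathlib

open Matrix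

/-- Frobenius norm of a real matrix. -/
noncomputable def frobNorm {a b : ℕ} (M : Matrix (Fin a) (Fin b) ℝ) : ℝ :=
  Real.sqrt (∑ i, ∑ j, M i j ^ 2)

/-- Spectral (induced Euclidean operator) norm of a real matrix. -/
noncomputable def specNorm {a b : ℕ} (M : Matrix (Fin a) (Fin b) ℝ) : ℝ :=
  ‖LinearMap.toContinuousLinearMap (Matrix.toEuclideanLin M)‖

/-- The norm `‖z‖ = (xᵀ P x + ‖Θ‖_F²)^{1/2}` on `ℝⁿ × ℝ^{L×ℓ}` induced by the
inner product `⟨(x,Θ),(x',Θ')⟩ = xᵀ P x' + tr(Θᵀ Θ')`. -/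
noncomputable def prodNorm {n L l : ℕ} (P : Matrix (Fin n) (Fin n) ℝ)
    (x : Fin n → ℝ) (Θ : Matrix (Fin L) (Fin l) ℝ) : ℝ :=
  Real.sqrt (x ⬝ᵥ P.mulVec x + ∑ i, ∑ j, Θ i j ^ 2)

section helpers

lemma cs_dot {k : ℕ} (u v : Fin k → ℝ) :
    u ⬝ᵥ v ≤ Real.sqrt (∑ i, u i ^ 2) * Real.sqrt (∑ i, v i ^ 2) := by
  have h := Finset.sum_mul_sq_le_sq_mul_sq Finset.univ u v
  calc u ⬝ᵥ v ≤ |∑ i, u i * v i| := le_abs_self _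
    _ = Real.sqrt ((∑ i, u i * v i) ^ 2) := (Real.sqrt_sq_eq_abs _).symm
    _ ≤ Real.sqrt ((∑ i, u i ^ 2) * ∑ i, v i ^ 2) := Real.sqrt_le_sqrt h
    _ = _ := Real.sqrt_mul (by positivity) _

lemma trace_key {L l : ℕ} (M : Matrix (Fin L) (Fin l) ℝ) (v : Fin L → ℝ) (w : Fin l → ℝ) :
    (Mᵀ * vecMulVec v w).trace = v ⬝ᵥ M.mulVec w := by
  simp only [Matrix.trace, Matrix.diag, Matrix.mul_apply, vecMulVec_apply, transpose_apply,
    dotProduct, mulVec, Finset.mul_sum]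
  rw [Finset.sum_comm]
  exact Finset.sum_congr rfl fun k _ => Finset.sum_congr rfl fun j _ => by ring

lemma dot_shift {n l L : ℕ} (N : Matrix (Fin n) (Fin l) ℝ) (Ψ : Matrix (Fin L) (Fin l) ℝ)
    (v : Fin L → ℝ) (x : Fin n → ℝ) :
    v ⬝ᵥ Ψ.mulVec (vecMul x N) = x ⬝ᵥ N.mulVec (Ψᵀ.mulVec v) := by
  rw [dotProduct_mulVec, dotProduct_comm, ← mulVec_transpose N x, ← mulVec_transpose Ψ v,
    mulVec_transpose, ← dotProduct_mulVec]

lemma spec_bound {a b : ℕ} (M : Matrix (Fin a) (Fin b) ℝ) (w : Fin b → ℝ) :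
    Real.sqrt (∑ i, (M.mulVec w) i ^ 2) ≤ specNorm M * Real.sqrt (∑ i, w i ^ 2) := by
  have h := (LinearMap.toContinuousLinearMap (Matrix.toEuclideanLin M)).le_opNorm
    ((WithLp.equiv 2 (Fin b → ℝ)).symm w)
  have e1 : ‖(LinearMap.toContinuousLinearMap (Matrix.toEuclideanLin M))
      ((WithLp.equiv 2 (Fin b → ℝ)).symm w)‖ = Real.sqrt (∑ i, (M.mulVec w) i ^ 2) := by
    rw [LinearMap.coe_toContinuousLinearMap', Matrix.toEuclideanLin_apply]
    rw [EuclideanSpace.norm_eq]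
    simp [Real.norm_eq_abs, sq_abs]
  have e2 : ‖(WithLp.equiv 2 (Fin b → ℝ)).symm w‖ = Real.sqrt (∑ i, w i ^ 2) := by
    rw [EuclideanSpace.norm_eq]
    simp [Real.norm_eq_abs, sq_abs]
  rw [e1, e2] at h
  exact h

lemma frob_bound {a b : ℕ} (M : Matrix (Fin a) (Fin b) ℝ) (v : Fin a → ℝ) :
    Real.sqrt (∑ j, (Mᵀ.mulVec v) j ^ 2) ≤ frobNorm M * Real.sqrt (∑ i, v i ^ 2) := by
  rw [frobNorm, ← Real.sqrt_mul (by positivity)]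
  apply Real.sqrt_le_sqrt
  rw [Finset.sum_comm, Finset.sum_mul]
  apply Finset.sum_le_sum
  intro j _
  have h := Finset.sum_mul_sq_le_sq_mul_sq Finset.univ (fun i => M i j) v
  calc (Mᵀ.mulVec v) j ^ 2 = (∑ i, M i j * v i) ^ 2 := by
        simp [mulVec, dotProduct, transpose_apply, mul_comm]
    _ ≤ (∑ i, M i j ^ 2) * ∑ i, v i ^ 2 := h

lemma lammin_bound {n : ℕ} (P : Matrix (Fin n) (Fin n) ℝ) (hP : P.PosDef)
    (x : Fin n → ℝ) :
    (⨅ i, hP.1.eigenvalues i) * (∑ i, x i ^ 2) ≤ x ⬝ᵥ P.mulVec x := by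
  set μ := ⨅ i, hP.1.eigenvalues i with hμ
  have hle : ∀ i, μ ≤ hP.1.eigenvalues i := fun i =>
    ciInf_le (Finite.bddBelow_range _) i
  have hspec := hP.1.spectral_theorem
  have hsub : P - μ • (1 : Matrix (Fin n) (Fin n) ℝ) =
      (hP.1.eigenvectorUnitary : Matrix (Fin n) (Fin n) ℝ) *
        (diagonal (fun i => hP.1.eigenvalues i - μ)) *
        (star (hP.1.eigenvectorUnitary : Matrix (Fin n) (Fin n) ℝ)) := by
    have hU : (hP.1.eigenvectorUnitary : Matrix (Fin n) (Fin n) ℝ) *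
        (star (hP.1.eigenvectorUnitary : Matrix (Fin n) (Fin n) ℝ)) = 1 :=
      (Matrix.mem_unitaryGroup_iff).mp hP.1.eigenvectorUnitary.2
    have hdiag : diagonal (fun i => hP.1.eigenvalues i - μ)
        = diagonal (RCLike.ofReal ∘ hP.1.eigenvalues) - μ • (1 : Matrix (Fin n) (Fin n) ℝ) := by
      ext i j
      by_cases h : i = j <;>
        simp [h, Matrix.diagonal_apply, Matrix.one_apply, Function.comp]
    conv_lhs => rw [hspec, Unitary.conjStarAlgAut_apply]
    rw [hdiag, Matrix.mul_sub, Matrix.sub_mul]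
    congr 1
    rw [Matrix.mul_smul, Matrix.mul_one, Matrix.smul_mul, hU]
  have hpsd : (P - μ • (1 : Matrix (Fin n) (Fin n) ℝ)).PosSemidef := by
    rw [hsub]
    exact Matrix.PosSemidef.mul_mul_conjTranspose_same
      (Matrix.posSemidef_diagonal_iff.mpr (fun i => sub_nonneg.mpr (hle i))) _
  have h0 := hpsd.dotProduct_mulVec_nonneg x
  simp only [star_trivial] at h0
  have : x ⬝ᵥ (P - μ • 1).mulVec x = x ⬝ᵥ P.mulVec x - μ * ∑ i, x i ^ 2 := by
    rw [Matrix.sub_mulVec, dotProduct_sub]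
    congr 1
    rw [Matrix.smul_mulVec, Matrix.one_mulVec, dotProduct_smul]
    simp [dotProduct, sq, Finset.mul_sum]
  rw [this] at h0
  linarith

end helpers


/-- The adaptive-regulation drift
`𝓗(x,Θ) = (A x + B (Θ̄ − Θ)ᵀ Λ(x), Λ(x) xᵀ P B)` satisfies the one-sided
growth condition `⟨z − z', 𝓗(z) − 𝓗(z')⟩ ≤ c r² + c r (‖z‖ + ‖z'‖)` with
`r = ‖z − z'‖` and `c = ‖PB‖₂ D 𝓛 / λ_min(P)`, whenever the parameter blocks
satisfy `‖Θ − Θ̄‖_F ≤ D`, `‖Θ' − Θ̄‖_F ≤ D` and `‖Θ − Θ'‖_F ≤ D`. -/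
theorem stmt_12 {n l L : ℕ} (hn : 0 < n)
    (A : Matrix (Fin n) (Fin n) ℝ) (B : Matrix (Fin n) (Fin l) ℝ)
    (P Q : Matrix (Fin n) (Fin n) ℝ)
    (hP : P.PosDef) (hQ : Q.PosDef)
    (hLyap : Aᵀ * P + P * A = -Q)
    (D 𝓛 : ℝ) (hD : 0 < D)
    (Λ : (Fin n → ℝ) → (Fin L → ℝ))
    (hΛ : ∀ x x' : Fin n → ℝ,
      Real.sqrt (∑ i, (Λ x - Λ x') i ^ 2) ≤ 𝓛 * Real.sqrt (∑ i, (x - x') i ^ 2))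
    (Θbar : Matrix (Fin L) (Fin l) ℝ) (c : ℝ)
    (hc : c = specNorm (P * B) * D * 𝓛 / (⨅ i, hP.1.eigenvalues i)) :
    ∀ (x x' : Fin n → ℝ) (Θ Θ' : Matrix (Fin L) (Fin l) ℝ),
      frobNorm (Θ - Θbar) ≤ D → frobNorm (Θ' - Θbar) ≤ D →
      frobNorm (Θ - Θ') ≤ D →
      (x - x') ⬝ᵥ P.mulVec
          ((A.mulVec x + B.mulVec ((Θbar - Θ)ᵀ.mulVec (Λ x)))
            - (A.mulVec x' + B.mulVec ((Θbar - Θ')ᵀ.mulVec (Λ x'))))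
        + ((Θ - Θ')ᵀ *
            (vecMulVec (Λ x) (vecMul x (P * B))
              - vecMulVec (Λ x') (vecMul x' (P * B)))).trace
      ≤ c * prodNorm P (x - x') (Θ - Θ') ^ 2
          + c * prodNorm P (x - x') (Θ - Θ') *
              (prodNorm P x Θ + prodNorm P x' Θ') := by
  intro x x' Θ Θ' hΘ hΘ' hΨfr
  haveI : Nonempty (Fin n) := ⟨⟨0, hn⟩⟩
  set μ := ⨅ i, hP.1.eigenvalues i with hμ
  have hμpos : 0 < μ := by
    obtain ⟨i0, hi0⟩ := Finite.exists_min hP.1.eigenvalues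
    have h1 : hP.1.eigenvalues i0 ≤ μ := le_ciInf hi0
    have h2 := hP.eigenvalues_pos i0
    linarith
  have h𝓛 : 0 ≤ 𝓛 := by
    by_contra h
    push_neg at h
    set u : Fin n → ℝ := fun _ => 1 with hu
    have h2 := hΛ u 0
    have h4 : (0:ℝ) < Real.sqrt (∑ i, (u - 0) i ^ 2) := by
      rw [Real.sqrt_pos]
      have he : ∑ i, (u - 0) i ^ 2 = (n:ℝ) := by simp [hu]
      rw [he]; exact_mod_cast hn
    nlinarith [Real.sqrt_nonneg (∑ i, (Λ u - Λ 0) i ^ 2)]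
  -- the key algebraic identity
  have key :
      (x - x') ⬝ᵥ P.mulVec
          ((A.mulVec x + B.mulVec ((Θbar - Θ)ᵀ.mulVec (Λ x)))
            - (A.mulVec x' + B.mulVec ((Θbar - Θ')ᵀ.mulVec (Λ x'))))
        + ((Θ - Θ')ᵀ * (vecMulVec (Λ x) (vecMul x (P * B))
              - vecMulVec (Λ x') (vecMul x' (P * B)))).trace
      = (x - x') ⬝ᵥ P.mulVec (A.mulVec (x - x'))
        + (x - x') ⬝ᵥ (P * B).mulVec ((Θbar - Θ)ᵀ.mulVec (Λ x - Λ x'))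
        + x ⬝ᵥ (P * B).mulVec ((Θ - Θ')ᵀ.mulVec (Λ x - Λ x')) := by
    rw [Matrix.mul_sub, Matrix.trace_sub, trace_key, trace_key, dot_shift, dot_shift]
    simp only [Matrix.transpose_sub, Matrix.mulVec_add, Matrix.mulVec_sub, Matrix.sub_mulVec,
      Matrix.mulVec_mulVec, dotProduct_add, dotProduct_sub, sub_dotProduct, add_dotProduct,
      Matrix.mul_sub, Matrix.sub_mul, Matrix.mul_assoc]
    ring
  rw [key]
  -- Lyapunov term is nonpositive
  have hPT : Pᵀ = P := by
    ext i j
    have h := congrFun (congrFun hP.1.eq i) j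
    simpa using h
  have lyap : (x - x') ⬝ᵥ P.mulVec (A.mulVec (x - x')) ≤ 0 := by
    set e := x - x' with he
    have hsym : e ⬝ᵥ (Aᵀ * P).mulVec e = e ⬝ᵥ P.mulVec (A.mulVec e) := by
      calc e ⬝ᵥ (Aᵀ * P).mulVec e = (e ᵥ* (Aᵀ * P)) ⬝ᵥ e := dotProduct_mulVec _ _ _
        _ = ((e ᵥ* Aᵀ) ᵥ* P) ⬝ᵥ e := by rw [vecMul_vecMul]
        _ = ((A *ᵥ e) ᵥ* P) ⬝ᵥ e := by rw [vecMul_transpose]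
        _ = (A *ᵥ e) ⬝ᵥ (P *ᵥ e) := (dotProduct_mulVec _ _ _).symm
        _ = (P *ᵥ e) ⬝ᵥ (A *ᵥ e) := dotProduct_comm _ _
        _ = (Pᵀ *ᵥ e) ⬝ᵥ (A *ᵥ e) := by rw [hPT]
        _ = (e ᵥ* P) ⬝ᵥ (A *ᵥ e) := by rw [mulVec_transpose]
        _ = e ⬝ᵥ P *ᵥ (A *ᵥ e) := (dotProduct_mulVec _ _ _).symm
    have h2 : e ⬝ᵥ ((Aᵀ * P + P * A).mulVec e) = 2 * (e ⬝ᵥ P.mulVec (A.mulVec e)) := by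
      rw [Matrix.add_mulVec, dotProduct_add, hsym, ← Matrix.mulVec_mulVec]
      ring
    have h3 : 0 ≤ e ⬝ᵥ Q.mulVec e := by
      have h := hQ.posSemidef.dotProduct_mulVec_nonneg e
      simpa using h
    have h4 : e ⬝ᵥ ((Aᵀ * P + P * A).mulVec e) = - (e ⬝ᵥ Q.mulVec e) := by
      rw [hLyap, Matrix.neg_mulVec, dotProduct_neg]
    linarith
  -- abbreviations for norms
  have hS0 : (0:ℝ) ≤ specNorm (P * B) := by unfold specNorm; exact norm_nonneg _
  have hne0 : (0:ℝ) ≤ Real.sqrt (∑ i, (x - x') i ^ 2) := Real.sqrt_nonneg _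
  have hnx0 : (0:ℝ) ≤ Real.sqrt (∑ i, x i ^ 2) := Real.sqrt_nonneg _
  have hδb : Real.sqrt (∑ i, (Λ x - Λ x') i ^ 2)
      ≤ 𝓛 * Real.sqrt (∑ i, (x - x') i ^ 2) := hΛ x x'
  have hfrsw : frobNorm (Θbar - Θ) = frobNorm (Θ - Θbar) := by
    unfold frobNorm
    congr 1
    exact Finset.sum_congr rfl fun i _ => Finset.sum_congr rfl fun j _ => by
      simp [Matrix.sub_apply]; ring
  -- generic cross-term bound
  have cross : ∀ (u : Fin n → ℝ) (M : Matrix (Fin L) (Fin l) ℝ), frobNorm M ≤ D →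
      u ⬝ᵥ (P * B).mulVec (Mᵀ.mulVec (Λ x - Λ x'))
      ≤ Real.sqrt (∑ i, u i ^ 2) * (specNorm (P * B) * (D *
          (𝓛 * Real.sqrt (∑ i, (x - x') i ^ 2)))) := by
    intro u M hM
    have hu0 : (0:ℝ) ≤ Real.sqrt (∑ i, u i ^ 2) := Real.sqrt_nonneg _
    calc u ⬝ᵥ (P * B).mulVec (Mᵀ.mulVec (Λ x - Λ x'))
        ≤ Real.sqrt (∑ i, u i ^ 2) *
            Real.sqrt (∑ i, ((P * B).mulVec (Mᵀ.mulVec (Λ x - Λ x'))) i ^ 2) := cs_dot _ _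
      _ ≤ Real.sqrt (∑ i, u i ^ 2) *
            (specNorm (P * B) * Real.sqrt (∑ j, (Mᵀ.mulVec (Λ x - Λ x')) j ^ 2)) :=
          mul_le_mul_of_nonneg_left (spec_bound _ _) hu0
      _ ≤ Real.sqrt (∑ i, u i ^ 2) *
            (specNorm (P * B) * (D * (𝓛 * Real.sqrt (∑ i, (x - x') i ^ 2)))) := by
          apply mul_le_mul_of_nonneg_left _ hu0
          apply mul_le_mul_of_nonneg_left _ hS0
          calc Real.sqrt (∑ j, (Mᵀ.mulVec (Λ x - Λ x')) j ^ 2)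
              ≤ frobNorm M * Real.sqrt (∑ i, (Λ x - Λ x') i ^ 2) := frob_bound _ _
            _ ≤ D * (𝓛 * Real.sqrt (∑ i, (x - x') i ^ 2)) :=
                mul_le_mul hM hδb (Real.sqrt_nonneg _) hD.le
  have T2 := cross (x - x') (Θbar - Θ) (by rw [hfrsw]; exact hΘ)
  have T3 := cross x (Θ - Θ') hΨfr
  -- relating Euclidean norms to prodNorm via μ
  have hPe0 : 0 ≤ (x - x') ⬝ᵥ P.mulVec (x - x') := by
    have h := hP.posSemidef.dotProduct_mulVec_nonneg (x - x'); simpa using h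
  have hPx0 : 0 ≤ x ⬝ᵥ P.mulVec x := by
    have h := hP.posSemidef.dotProduct_mulVec_nonneg x; simpa using h
  have hΨ0 : (0:ℝ) ≤ ∑ i, ∑ j, (Θ - Θ') i j ^ 2 := by positivity
  have hΘ0 : (0:ℝ) ≤ ∑ i, ∑ j, Θ i j ^ 2 := by positivity
  have hr0 : 0 ≤ prodNorm P (x - x') (Θ - Θ') := Real.sqrt_nonneg _
  have hz10 : 0 ≤ prodNorm P x Θ := Real.sqrt_nonneg _
  have hz20 : 0 ≤ prodNorm P x' Θ' := Real.sqrt_nonneg _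
  have hre : μ * Real.sqrt (∑ i, (x - x') i ^ 2) ^ 2 ≤ prodNorm P (x - x') (Θ - Θ') ^ 2 := by
    rw [Real.sq_sqrt (by positivity), prodNorm, Real.sq_sqrt (add_nonneg hPe0 hΨ0)]
    have h := lammin_bound P hP (x - x')
    linarith
  have h1 : Real.sqrt μ * Real.sqrt (∑ i, (x - x') i ^ 2) ≤ prodNorm P (x - x') (Θ - Θ') := by
    rw [← Real.sqrt_mul hμpos.le, prodNorm]
    apply Real.sqrt_le_sqrt
    have h := lammin_bound P hP (x - x')
    linarith
  have h2 : Real.sqrt μ * Real.sqrt (∑ i, x i ^ 2) ≤ prodNorm P x Θ := by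
    rw [← Real.sqrt_mul hμpos.le, prodNorm]
    apply Real.sqrt_le_sqrt
    have h := lammin_bound P hP x
    linarith
  have hμxz : μ * (Real.sqrt (∑ i, x i ^ 2) * Real.sqrt (∑ i, (x - x') i ^ 2))
      ≤ prodNorm P x Θ * prodNorm P (x - x') (Θ - Θ') := by
    calc μ * (Real.sqrt (∑ i, x i ^ 2) * Real.sqrt (∑ i, (x - x') i ^ 2))
        = (Real.sqrt μ * Real.sqrt (∑ i, x i ^ 2)) *
          (Real.sqrt μ * Real.sqrt (∑ i, (x - x') i ^ 2)) := by
          have hsq : Real.sqrt μ ^ 2 = μ := Real.sq_sqrt hμpos.le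
          linear_combination (-(Real.sqrt (∑ i, x i ^ 2) *
            Real.sqrt (∑ i, (x - x') i ^ 2))) * hsq
      _ ≤ prodNorm P x Θ * prodNorm P (x - x') (Θ - Θ') :=
          mul_le_mul h2 h1 (by positivity) hz10
  -- final combination
  have hK0 : (0:ℝ) ≤ specNorm (P * B) * D * 𝓛 / μ :=
    div_nonneg (mul_nonneg (mul_nonneg hS0 hD.le) h𝓛) hμpos.le
  have hc0 : 0 ≤ c := by rw [hc]; exact hK0
  have hcan : ∀ t : ℝ, (specNorm (P * B) * D * 𝓛 / μ) * (μ * t)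
      = specNorm (P * B) * D * 𝓛 * t := by
    intro t
    field_simp
  have c1 : Real.sqrt (∑ i, (x - x') i ^ 2) * (specNorm (P * B) * (D *
        (𝓛 * Real.sqrt (∑ i, (x - x') i ^ 2))))
      ≤ c * prodNorm P (x - x') (Θ - Θ') ^ 2 := by
    calc Real.sqrt (∑ i, (x - x') i ^ 2) * (specNorm (P * B) * (D *
          (𝓛 * Real.sqrt (∑ i, (x - x') i ^ 2))))
        = (specNorm (P * B) * D * 𝓛 / μ) * (μ * Real.sqrt (∑ i, (x - x') i ^ 2) ^ 2) := by
          rw [hcan]; ring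
      _ ≤ (specNorm (P * B) * D * 𝓛 / μ) * prodNorm P (x - x') (Θ - Θ') ^ 2 :=
          mul_le_mul_of_nonneg_left hre hK0
      _ = c * prodNorm P (x - x') (Θ - Θ') ^ 2 := by rw [hc]
  have c2 : Real.sqrt (∑ i, x i ^ 2) * (specNorm (P * B) * (D *
        (𝓛 * Real.sqrt (∑ i, (x - x') i ^ 2))))
      ≤ c * (prodNorm P x Θ * prodNorm P (x - x') (Θ - Θ')) := by
    calc Real.sqrt (∑ i, x i ^ 2) * (specNorm (P * B) * (D *
          (𝓛 * Real.sqrt (∑ i, (x - x') i ^ 2))))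
        = (specNorm (P * B) * D * 𝓛 / μ) *
            (μ * (Real.sqrt (∑ i, x i ^ 2) * Real.sqrt (∑ i, (x - x') i ^ 2))) := by
          rw [hcan]; ring
      _ ≤ (specNorm (P * B) * D * 𝓛 / μ) *
            (prodNorm P x Θ * prodNorm P (x - x') (Θ - Θ')) :=
          mul_le_mul_of_nonneg_left hμxz hK0
      _ = c * (prodNorm P x Θ * prodNorm P (x - x') (Θ - Θ')) := by rw [hc]
  have hlast : 0 ≤ c * prodNorm P (x - x') (Θ - Θ') * prodNorm P x' Θ' :=
    mul_nonneg (mul_nonneg hc0 hr0) hz20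
  have hexp : c * prodNorm P (x - x') (Θ - Θ') * (prodNorm P x Θ + prodNorm P x' Θ')
      = c * (prodNorm P x Θ * prodNorm P (x - x') (Θ - Θ'))
        + c * prodNorm P (x - x') (Θ - Θ') * prodNorm P x' Θ' := by ring
  linarith
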